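/- The coefficients V^{[r]}_{M,n} of the Gaussian binomial coefficient [M choose n]_q are symmetric and unimodal: V^{[r]}_{M,n} = V^{[n(M−n)−r]}_{M,n} for all 0 ≤ r ≤ n(M−n), and V^{[r]}_{M,n} ≤ V^{[r+1]}_{M,n} for r < n(M−n)/2. -/
import Mathlib

open Finset Polynomial

namespace GBU


def up (S : Finset ℕ) (i : ℕ) : Finset ℕ := insert (i+1) (S.erase i)
def down (S : Finset ℕ) (k : ℕ) : Finset ℕ := insert k (S.erase (k+1))
abbrev ok (i : ℕ) (S : Finset ℕ) : Prop := i ∈ S ∧ i+1 ∉ S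
abbrev ok' (k : ℕ) (S : Finset ℕ) : Prop := k+1 ∈ S ∧ k ∉ S

lemma mem_up {S : Finset ℕ} {i x : ℕ} : x ∈ up S i ↔ x = i+1 ∨ (x ≠ i ∧ x ∈ S) := by
  simp [up, Finset.mem_insert, Finset.mem_erase, and_comm]

lemma mem_down {S : Finset ℕ} {k x : ℕ} : x ∈ down S k ↔ x = k ∨ (x ≠ k+1 ∧ x ∈ S) := by
  simp [down, Finset.mem_insert, Finset.mem_erase, and_comm]

lemma updown (k : ℕ) (R S : Finset ℕ) :
    (ok k R ∧ S = up R k) ↔ (ok' k S ∧ R = down S k) := by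
  constructor
  · rintro ⟨⟨hk, hk1⟩, rfl⟩
    refine ⟨⟨mem_up.2 (Or.inl rfl), ?_⟩, ?_⟩
    · rw [mem_up]; push_neg
      exact ⟨by omega, fun h => absurd rfl h⟩
    · ext x
      rw [mem_down, mem_up]
      by_cases hx : x ∈ R
      · have h1 : x ≠ k + 1 := fun h => hk1 (h ▸ hx)
        simp [hx, h1]
        omega
      · have h1 : x ≠ k := fun h => hx (h ▸ hk)
        simp [hx, h1]
  · rintro ⟨⟨hk1, hk⟩, rfl⟩
    refine ⟨⟨mem_down.2 (Or.inl rfl), ?_⟩, ?_⟩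
    · rw [mem_down]; push_neg
      exact ⟨by omega, fun h => absurd rfl h⟩
    · ext x
      rw [mem_up, mem_down]
      by_cases hx : x ∈ S
      · have h1 : x ≠ k := fun h => hk (h ▸ hx)
        simp [hx, h1]
        omega
      · have h1 : x ≠ k + 1 := fun h => hx (h ▸ hk1)
        simp [hx, h1]

lemma up_inj {S : Finset ℕ} {i j : ℕ} (hi : ok i S) (hj : ok j S)
    (hup : up S i = up S j) : i = j := by
  have h1 : i+1 ∈ up S i := mem_up.2 (Or.inl rfl)
  rw [hup, mem_up] at h1
  rcases h1 with h | ⟨_, h⟩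
  · omega
  · exact absurd h hi.2

lemma down_inj {S : Finset ℕ} {k l : ℕ} (hk : ok' k S) (hl : ok' l S)
    (hdown : down S k = down S l) : k = l := by
  have h1 : k ∈ down S k := mem_down.2 (Or.inl rfl)
  rw [hdown, mem_down] at h1
  rcases h1 with h | ⟨_, h⟩
  · omega
  · exact absurd h hk.2

/-- the key cross-move correspondence -/
lemma cross {S S' : Finset ℕ} (hne : S ≠ S') (i j : ℕ) :
    (ok i S ∧ ok j S' ∧ up S i = up S' j) ↔
    (ok' j S ∧ ok' i S' ∧ down S j = down S' i) := by
  constructor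
  · rintro ⟨⟨hiS, hi1S⟩, ⟨hjS', hj1S'⟩, hT⟩
    have hij : i ≠ j := by
      rintro rfl
      apply hne
      have e1 := ((updown i S (up S i)).1 ⟨⟨hiS, hi1S⟩, rfl⟩).2
      have e2 := ((updown i S' (up S' i)).1 ⟨⟨hjS', hj1S'⟩, rfl⟩).2
      rw [e1, e2, hT]
    have hmem : ∀ x, (x = i+1 ∨ (x ≠ i ∧ x ∈ S)) ↔ (x = j+1 ∨ (x ≠ j ∧ x ∈ S')) :=
      fun x => by rw [← mem_up, ← mem_up, hT]
    have hj_not : ¬ (j = i+1 ∨ (j ≠ i ∧ j ∈ S)) :=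
      fun h => (by simp [hj1S'] : ¬ (j = j+1 ∨ (j ≠ j ∧ j ∈ S'))) ((hmem j).1 h)
    have hjS : j ∉ S := fun h => hj_not (Or.inr ⟨Ne.symm hij, h⟩)
    have hji1 : j ≠ i+1 := fun h => hj_not (Or.inl h)
    have hi_not : ¬ (i = j+1 ∨ (i ≠ j ∧ i ∈ S')) :=
      fun h => (by simp [hi1S] : ¬ (i = i+1 ∨ (i ≠ i ∧ i ∈ S))) ((hmem i).2 h)
    have hiS' : i ∉ S' := fun h => hi_not (Or.inr ⟨hij, h⟩)
    have hij1 : i ≠ j+1 := fun h => hi_not (Or.inl h)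
    have hj1S : j+1 ∈ S := by
      rcases (hmem (j+1)).2 (Or.inl rfl) with h | ⟨_, h⟩
      · omega
      · exact h
    have hi1S' : i+1 ∈ S' := by
      rcases (hmem (i+1)).1 (Or.inl rfl) with h | ⟨_, h⟩
      · omega
      · exact h
    refine ⟨⟨hj1S, hjS⟩, ⟨hi1S', hiS'⟩, ?_⟩
    ext x
    rw [mem_down, mem_down]
    have hm := hmem x
    by_cases hx : x ∈ S <;> by_cases hx' : x ∈ S'
    · have d1 : x ≠ i+1 := fun h => hi1S (h ▸ hx)
      have d3 : x ≠ j+1 := fun h => hj1S' (h ▸ hx')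
      simp [hx, hx', d1, d3]
    · have d1 : x ≠ i+1 := fun h => hi1S (h ▸ hx)
      have d2 : x ≠ j := fun h => hx' (h ▸ hjS')
      simp only [hx, hx', d1, d2, and_true, and_false, or_false, false_or,
        iff_false, ne_eq, not_false_eq_true, true_and, true_iff, false_iff,
        not_or, iff_true] at hm ⊢
      omega
    · have d3 : x ≠ j+1 := fun h => hj1S' (h ▸ hx')
      have d4 : x ≠ i := fun h => hx (h ▸ hiS)
      simp only [hx, hx', d3, d4, and_true, and_false, or_false, false_or,
        iff_false, ne_eq, not_false_eq_true, true_and, true_iff, false_iff,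
        not_or, iff_true] at hm ⊢
      omega
    · have d2 : x ≠ j := fun h => hx' (h ▸ hjS')
      have d4 : x ≠ i := fun h => hx (h ▸ hiS)
      have d5 : x ≠ j+1 := fun h => hx (h ▸ hj1S)
      have d6 : x ≠ i+1 := fun h => hx' (h ▸ hi1S')
      simp [hx, hx', d2, d4]
  · rintro ⟨⟨hj1S, hjS⟩, ⟨hi1S', hiS'⟩, hR⟩
    have e1 := (updown j (down S j) S).2 ⟨⟨hj1S, hjS⟩, rfl⟩
    have e2 := (updown i (down S' i) S').2 ⟨⟨hi1S', hiS'⟩, rfl⟩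
    rw [← hR] at e2
    obtain ⟨⟨hjR, hj1R⟩, hS⟩ := e1
    obtain ⟨⟨hiR, hi1R⟩, hS'⟩ := e2
    have hij : i ≠ j := by
      rintro rfl
      exact hne (hS.trans hS'.symm)
    have hji1 : j ≠ i+1 := fun h => hi1R (h ▸ hjR)
    have hij1 : i ≠ j+1 := fun h => hj1R (h ▸ hiR)
    have hmS : ∀ x, x ∈ S ↔ (x = j+1 ∨ (x ≠ j ∧ x ∈ down S j)) := fun x => by
      rw [← mem_up, ← hS]
    have hmS' : ∀ x, x ∈ S' ↔ (x = i+1 ∨ (x ≠ i ∧ x ∈ down S j)) := fun x => by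
      rw [← mem_up, ← hS']
    refine ⟨⟨?_, ?_⟩, ⟨?_, ?_⟩, ?_⟩
    · exact (hmS i).2 (Or.inr ⟨hij, hiR⟩)
    · rw [hmS (i+1)]; push_neg
      exact ⟨by omega, fun _ => hi1R⟩
    · exact (hmS' j).2 (Or.inr ⟨Ne.symm hij, hjR⟩)
    · rw [hmS' (j+1)]; push_neg
      exact ⟨by omega, fun _ => hj1R⟩
    · ext x
      rw [mem_up, mem_up, hmS x, hmS' x]
      by_cases hx : x ∈ down S j
      · have d1 : x ≠ i+1 := fun h => hi1R (h ▸ hx)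
        have d2 : x ≠ j+1 := fun h => hj1R (h ▸ hx)
        simp only [hx, and_true, or_true, true_and]
        omega
      · have d3 : x ≠ i := fun h => hx (h ▸ hiR)
        have d4 : x ≠ j := fun h => hx (h ▸ hjR)
        simp only [hx, and_false, false_and, or_false]
        omega

def c (M i : ℕ) : ℕ := i * (M - i)
noncomputable def a (M i : ℕ) : ℝ := Real.sqrt (c M i)

lemma a_sq (M i : ℕ) : a M i * a M i = (c M i : ℝ) :=
  Real.mul_self_sqrt (Nat.cast_nonneg _)

noncomputable def u (M : ℕ) (T S : Finset ℕ) : ℝ :=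
  ∑ i ∈ Finset.range M, if ok i S ∧ T = up S i then a M (i+1) else 0

def bigU (M n : ℕ) : Finset (Finset ℕ) := Finset.powersetCard n (Finset.range (M+1))
def box (M n : ℕ) : Finset (Finset ℕ) := Finset.powersetCard n (Finset.range M)
def lvl (M n t : ℕ) : Finset (Finset ℕ) := (box M n).filter (fun S => ∑ i ∈ S, i = t)

lemma up_mem_bigU {M n : ℕ} {S : Finset ℕ} {i : ℕ} (hS : S ∈ box M n) (hi : ok i S) :
    up S i ∈ bigU M n := by
  rw [box, Finset.mem_powersetCard] at hS
  rw [bigU, Finset.mem_powersetCard]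
  constructor
  · intro x hx
    rcases mem_up.1 hx with rfl | ⟨_, hxS⟩
    · have := Finset.mem_range.1 (hS.1 hi.1)
      exact Finset.mem_range.2 (by omega)
    · exact Finset.mem_range.2 (by have := Finset.mem_range.1 (hS.1 hxS); omega)
  · rw [up, Finset.card_insert_of_notMem (fun hc => hi.2 (Finset.mem_of_mem_erase hc)),
      Finset.card_erase_of_mem hi.1]
    have : S.card ≠ 0 := fun hc => by
      rw [Finset.card_eq_zero] at hc
      exact absurd (hc ▸ hi.1) (Finset.notMem_empty i)
    omega

lemma down_mem_bigU {M n : ℕ} {S : Finset ℕ} {k : ℕ} (hS : S ∈ box M n) (hk : ok' k S) :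
    down S k ∈ bigU M n := by
  rw [box, Finset.mem_powersetCard] at hS
  rw [bigU, Finset.mem_powersetCard]
  constructor
  · intro x hx
    rcases mem_down.1 hx with rfl | ⟨_, hxS⟩
    · have := Finset.mem_range.1 (hS.1 hk.1)
      exact Finset.mem_range.2 (by omega)
    · exact Finset.mem_range.2 (by have := Finset.mem_range.1 (hS.1 hxS); omega)
  · rw [down, Finset.card_insert_of_notMem (fun hc => hk.2 (Finset.mem_of_mem_erase hc)),
      Finset.card_erase_of_mem hk.1]
    have : S.card ≠ 0 := fun hc => by
      rw [Finset.card_eq_zero] at hc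
      exact absurd (hc ▸ hk.1) (Finset.notMem_empty (k+1))
    omega

lemma collapse {α : Type*} [DecidableEq α] (W : Finset α) (P Q : Prop) [Decidable P] [Decidable Q]
    (t1 t2 : α) (hmem : P → t1 ∈ W) (v : ℝ) :
    (∑ T ∈ W, if (P ∧ T = t1) ∧ (Q ∧ T = t2) then v else 0)
      = if P ∧ Q ∧ t1 = t2 then v else 0 := by
  by_cases hc : P ∧ Q ∧ t1 = t2
  · obtain ⟨hP, hQ, ht⟩ := hc
    have : ∀ T ∈ W, (if (P ∧ T = t1) ∧ (Q ∧ T = t2) then v else 0)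
        = if T = t1 then v else 0 := by
      intro T _
      subst ht
      simp [hP, hQ]
    rw [Finset.sum_congr rfl this, Finset.sum_ite_eq' W t1 (fun _ => v),
      if_pos (hmem hP), if_pos ⟨hP, hQ, ht⟩]
  · rw [if_neg hc]
    apply Finset.sum_eq_zero
    intro T _
    rw [if_neg]
    rintro ⟨⟨hP, rfl⟩, ⟨hQ, h2⟩⟩
    exact hc ⟨hP, hQ, h2⟩

lemma ite_mul_ite (P Q : Prop) [Decidable P] [Decidable Q] (x y : ℝ) :
    (if P then x else 0) * (if Q then y else 0) = if P ∧ Q then x * y else 0 := by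
  by_cases hP : P <;> by_cases hQ : Q <;> simp [hP, hQ]

lemma K_eq {M n : ℕ} {S S' : Finset ℕ} (hS : S ∈ box M n) :
    (∑ T ∈ bigU M n, u M T S * u M T S')
      = ∑ i ∈ Finset.range M, ∑ j ∈ Finset.range M,
          if ok i S ∧ ok j S' ∧ up S i = up S' j then a M (i+1) * a M (j+1) else 0 := by
  have step1 : ∀ T, u M T S * u M T S'
      = ∑ i ∈ Finset.range M, ∑ j ∈ Finset.range M,
          if (ok i S ∧ T = up S i) ∧ (ok j S' ∧ T = up S' j)
          then a M (i+1) * a M (j+1) else 0 := by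
    intro T
    rw [u, u, Finset.sum_mul_sum]
    exact Finset.sum_congr rfl fun i _ => Finset.sum_congr rfl fun j _ =>
      ite_mul_ite _ _ _ _
  rw [Finset.sum_congr rfl fun T _ => step1 T]
  rw [Finset.sum_comm]
  refine Finset.sum_congr rfl fun i _ => ?_
  rw [Finset.sum_comm]
  refine Finset.sum_congr rfl fun j _ => ?_
  rw [collapse (bigU M n) (ok i S) (ok j S') (up S i) (up S' j)
    (fun hP => up_mem_bigU hS hP)]

lemma L_eq {M n : ℕ} {S S' : Finset ℕ} (hS : S ∈ box M n) :
    (∑ R ∈ bigU M n, u M S R * u M S' R)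
      = ∑ k ∈ Finset.range M, ∑ l ∈ Finset.range M,
          if ok' k S ∧ ok' l S' ∧ down S k = down S' l then a M (k+1) * a M (l+1) else 0 := by
  have hu : ∀ (V : Finset ℕ) (R : Finset ℕ), u M V R
      = ∑ k ∈ Finset.range M, if ok' k V ∧ R = down V k then a M (k+1) else 0 := by
    intro V R
    rw [u]
    refine Finset.sum_congr rfl fun k _ => ?_
    congr 1
    exact propext (updown k R V)
  have step1 : ∀ R, u M S R * u M S' R
      = ∑ k ∈ Finset.range M, ∑ l ∈ Finset.range M,
          if (ok' k S ∧ R = down S k) ∧ (ok' l S' ∧ R = down S' l)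
          then a M (k+1) * a M (l+1) else 0 := by
    intro R
    rw [hu S R, hu S' R, Finset.sum_mul_sum]
    exact Finset.sum_congr rfl fun k _ => Finset.sum_congr rfl fun l _ =>
      ite_mul_ite _ _ _ _
  rw [Finset.sum_congr rfl fun R _ => step1 R]
  rw [Finset.sum_comm]
  refine Finset.sum_congr rfl fun k _ => ?_
  rw [Finset.sum_comm]
  refine Finset.sum_congr rfl fun l _ => ?_
  rw [collapse (bigU M n) (ok' k S) (ok' l S') (down S k) (down S' l)
    (fun hP => down_mem_bigU hS hP)]

lemma KL_offdiag {M n : ℕ} {S S' : Finset ℕ} (hS : S ∈ box M n) (hne : S ≠ S') :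
    (∑ T ∈ bigU M n, u M T S * u M T S') = ∑ R ∈ bigU M n, u M S R * u M S' R := by
  rw [K_eq hS, L_eq hS]
  rw [Finset.sum_comm]
  refine Finset.sum_congr rfl fun j _ => Finset.sum_congr rfl fun i _ => ?_
  exact if_congr (cross hne i j) (mul_comm _ _) rfl

lemma K_diag {M n : ℕ} {S : Finset ℕ} (hS : S ∈ box M n) :
    (∑ T ∈ bigU M n, u M T S * u M T S)
      = ∑ i ∈ Finset.range M, if ok i S then (c M (i+1) : ℝ) else 0 := by
  rw [K_eq hS]
  refine Finset.sum_congr rfl fun i hi => ?_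
  rw [Finset.sum_eq_single i]
  · by_cases h : ok i S
    · simp [h, a_sq]
    · simp [h]
  · intro j _ hji
    rw [if_neg]
    rintro ⟨h1, h2, h3⟩
    exact hji (up_inj h1 h2 h3).symm
  · intro hmem
    exact absurd hi hmem

lemma L_diag {M n : ℕ} {S : Finset ℕ} (hS : S ∈ box M n) :
    (∑ R ∈ bigU M n, u M S R * u M S R)
      = ∑ k ∈ Finset.range M, if ok' k S then (c M (k+1) : ℝ) else 0 := by
  rw [L_eq hS]
  refine Finset.sum_congr rfl fun k hk => ?_
  rw [Finset.sum_eq_single k]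
  · by_cases h : ok' k S
    · simp [h, a_sq]
    · simp [h]
  · intro l _ hlk
    rw [if_neg]
    rintro ⟨h1, h2, h3⟩
    exact hlk (down_inj h1 h2 h3).symm
  · intro hmem
    exact absurd hk hmem

def c2 (n : ℕ) : ℕ := Nat.choose n 2
lemma c2_succ (k : ℕ) : c2 (k+1) = c2 k + k := by
  simp [c2, Nat.choose_succ_succ, Nat.choose_one_right, Nat.add_comm]
lemma two_c2 (n : ℕ) : 2 * c2 n = n * (n - 1) := by
  induction n with
  | zero => rfl
  | succ k ih =>
    rw [c2_succ, Nat.mul_add, ih]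
    rcases Nat.eq_zero_or_pos k with rfl | hk
    · simp
    · have h1 : (k - 1) + 2 = k + 1 := by omega
      calc k * (k-1) + 2 * k = k * ((k-1) + 2) := by ring
        _ = (k+1) * k := by rw [h1]; ring

lemma KL_diag_sub {M n r : ℕ} (hn : n ≤ M) {S : Finset ℕ} (hS : S ∈ lvl M n (r + c2 n)) :
    (∑ T ∈ bigU M n, u M T S * u M T S) - (∑ R ∈ bigU M n, u M S R * u M S R)
      = ((n * (M - n) : ℕ) : ℝ) - 2 * (r : ℝ) := by
  obtain ⟨hbox, hsum⟩ := Finset.mem_filter.1 hS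
  obtain ⟨hsub, hcard⟩ := Finset.mem_powersetCard.1 hbox
  rw [K_diag hbox, L_diag hbox, ← Finset.sum_sub_distrib]
  have point : ∀ i ∈ Finset.range M,
      ((if ok i S then (c M (i+1) : ℝ) else 0) - (if ok' i S then (c M (i+1) : ℝ) else 0))
      = (if i ∈ S then (c M (i+1) : ℝ) else 0) - (if i+1 ∈ S then (c M (i+1) : ℝ) else 0) := by
    intro i _
    by_cases h1 : i ∈ S <;> by_cases h2 : i+1 ∈ S <;> simp [ok, ok', h1, h2]
  rw [Finset.sum_congr rfl point, Finset.sum_sub_distrib]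
  have shift : (∑ i ∈ Finset.range M, if i+1 ∈ S then (c M (i+1) : ℝ) else 0)
      = ∑ i ∈ Finset.range M, if i ∈ S then (c M i : ℝ) else 0 := by
    have h1 : (∑ i ∈ Finset.range (M+1), if i ∈ S then (c M i : ℝ) else 0)
        = (∑ i ∈ Finset.range M, if i+1 ∈ S then (c M (i+1) : ℝ) else 0)
          + (if 0 ∈ S then (c M 0 : ℝ) else 0) := Finset.sum_range_succ' _ _
    have h2 : (∑ i ∈ Finset.range (M+1), if i ∈ S then (c M i : ℝ) else 0)
        = (∑ i ∈ Finset.range M, if i ∈ S then (c M i : ℝ) else 0)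
          + (if M ∈ S then (c M M : ℝ) else 0) := Finset.sum_range_succ _ _
    have hc0 : c M 0 = 0 := by simp [c]
    have hcM : c M M = 0 := by simp [c]
    rw [hc0] at h1
    rw [hcM] at h2
    simp only [Nat.cast_zero, ite_self] at h1 h2
    linarith [h1, h2]
  rw [shift, ← Finset.sum_sub_distrib]
  have point2 : ∀ i ∈ Finset.range M,
      ((if i ∈ S then (c M (i+1) : ℝ) else 0) - (if i ∈ S then (c M i : ℝ) else 0))
      = (if i ∈ S then ((c M (i+1) : ℝ) - (c M i : ℝ)) else 0) := by
    intro i _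
    by_cases h : i ∈ S <;> simp [h]
  rw [Finset.sum_congr rfl point2, Finset.sum_ite_mem, Finset.inter_eq_right.2 hsub]
  have point3 : ∀ i ∈ S, ((c M (i+1) : ℝ) - (c M i : ℝ)) = (M : ℝ) - 1 - 2*(i:ℝ) := by
    intro i hiS
    have hiM : i < M := Finset.mem_range.1 (hsub hiS)
    rw [c, c]
    push_cast [Nat.cast_sub (by omega : i+1 ≤ M), Nat.cast_sub (by omega : i ≤ M)]
    ring
  rw [Finset.sum_congr rfl point3]
  have hSsum : ((∑ i ∈ S, i : ℕ) : ℝ) = (r : ℝ) + (c2 n : ℝ) := by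
    rw [hsum]; push_cast; ring
  have main : (∑ i ∈ S, ((M : ℝ) - 1 - 2*(i:ℝ)))
      = (n : ℝ) * ((M:ℝ) - 1) - 2 * ((r:ℝ) + (c2 n : ℝ)) := by
    rw [Finset.sum_sub_distrib, Finset.sum_const, hcard, nsmul_eq_mul, ← Finset.mul_sum]
    rw [← Nat.cast_sum, hSsum]
  rw [main]
  rcases Nat.eq_zero_or_pos n with rfl | hn1
  · have hS0 : S = ∅ := Finset.card_eq_zero.1 hcard
    have : r = 0 := by
      rw [hS0] at hsum
      simp [c2] at hsum
      omega
    subst this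
    simp [c2]
  · have hM1 : 1 ≤ M := le_trans hn1 hn
    have hsplit : n * (M - 1) = n * (M - n) + n * (n - 1) := by
      have he : M - 1 = (M - n) + (n - 1) := by omega
      rw [he, Nat.mul_add]
    have h2c2 := two_c2 n
    have e1 : ((n * (M-1) : ℕ) : ℝ) = (n:ℝ) * ((M:ℝ) - 1) := by
      push_cast [Nat.cast_sub hM1]
      ring
    have e2 : ((n * (M-1) : ℕ) : ℝ) = ((n * (M-n) : ℕ) : ℝ) + ((n * (n-1) : ℕ) : ℝ) := by
      rw [← Nat.cast_add, hsplit]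
    have e3 : ((n * (n-1) : ℕ) : ℝ) = 2 * ((c2 n : ℕ) : ℝ) := by
      rw [← h2c2]; push_cast; ring
    linarith [e1, e2, e3]

lemma quad_expand (W A : Finset (Finset ℕ)) (f : Finset ℕ → ℝ)
    (w : Finset ℕ → Finset ℕ → ℝ) :
    (∑ T ∈ W, (∑ S ∈ A, w T S * f S)^2)
      = ∑ S ∈ A, ∑ S' ∈ A, f S * f S' * (∑ T ∈ W, w T S * w T S') := by
  have e1 : ∀ T, (∑ S ∈ A, w T S * f S)^2
      = ∑ S ∈ A, ∑ S' ∈ A, (w T S * f S) * (w T S' * f S') := by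
    intro T; rw [sq, Finset.sum_mul_sum]
  rw [Finset.sum_congr rfl fun T _ => e1 T, Finset.sum_comm]
  refine Finset.sum_congr rfl fun S _ => ?_
  rw [Finset.sum_comm]
  refine Finset.sum_congr rfl fun S' _ => ?_
  rw [Finset.mul_sum]
  exact Finset.sum_congr rfl fun T _ => by ring

lemma master {M n r : ℕ} (hn : n ≤ M) (f : Finset ℕ → ℝ) :
    (∑ T ∈ bigU M n, (∑ S ∈ lvl M n (r + c2 n), u M T S * f S)^2)
      - (∑ R ∈ bigU M n, (∑ S ∈ lvl M n (r + c2 n), u M S R * f S)^2)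
      = (((n*(M-n) : ℕ) : ℝ) - 2*(r:ℝ)) * ∑ S ∈ lvl M n (r + c2 n), (f S)^2 := by
  rw [quad_expand (bigU M n) _ f (fun T S => u M T S),
      quad_expand (bigU M n) _ f (fun R S => u M S R),
      ← Finset.sum_sub_distrib]
  have key : ∀ S ∈ lvl M n (r + c2 n),
      ((∑ S' ∈ lvl M n (r + c2 n), f S * f S' * (∑ T ∈ bigU M n, u M T S * u M T S'))
        - (∑ S' ∈ lvl M n (r + c2 n), f S * f S' * (∑ R ∈ bigU M n, u M S R * u M S' R)))
      = (f S)^2 * (((n*(M-n) : ℕ) : ℝ) - 2*(r:ℝ)) := by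
    intro S hSl
    have hbox : S ∈ box M n := (Finset.mem_filter.1 hSl).1
    rw [← Finset.sum_sub_distrib]
    rw [Finset.sum_eq_single S (fun S' _ hne => by
        rw [KL_offdiag hbox (Ne.symm hne), sub_self])
      (fun h => absurd hSl h)]
    have := KL_diag_sub hn hSl
    calc f S * f S * (∑ T ∈ bigU M n, u M T S * u M T S)
          - f S * f S * (∑ R ∈ bigU M n, u M S R * u M S R)
        = f S * f S * ((∑ T ∈ bigU M n, u M T S * u M T S)
            - (∑ R ∈ bigU M n, u M S R * u M S R)) := by ring
      _ = f S * f S * (((n*(M-n) : ℕ) : ℝ) - 2*(r:ℝ)) := by rw [this]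
      _ = (f S)^2 * (((n*(M-n) : ℕ) : ℝ) - 2*(r:ℝ)) := by ring
  rw [Finset.sum_congr rfl key, ← Finset.sum_mul]
  ring

lemma u_support {M n t : ℕ} {S T : Finset ℕ} (hS : S ∈ lvl M n t)
    (hT : T ∉ lvl M n (t+1)) : u M T S = 0 := by
  obtain ⟨hbox, hsum⟩ := Finset.mem_filter.1 hS
  obtain ⟨hsub, hcard⟩ := Finset.mem_powersetCard.1 hbox
  apply Finset.sum_eq_zero
  intro i _
  by_cases hc : ok i S ∧ T = up S i
  · rw [if_pos hc]
    obtain ⟨⟨hiS, hi1S⟩, rfl⟩ := hc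
    by_cases hcz : c M (i+1) = 0
    · rw [a, hcz]
      simp
    · exfalso
      apply hT
      have hi1M : i + 1 < M := by
        rw [c] at hcz
        have := Nat.mul_ne_zero_iff.1 hcz
        omega
      rw [lvl, Finset.mem_filter, box, Finset.mem_powersetCard]
      have hi1e : i + 1 ∉ S.erase i := fun h => hi1S (Finset.mem_of_mem_erase h)
      refine ⟨⟨?_, ?_⟩, ?_⟩
      · intro x hx
        rcases mem_up.1 hx with rfl | ⟨_, hxS⟩
        · exact Finset.mem_range.2 hi1M
        · exact hsub hxS
      · rw [up, Finset.card_insert_of_notMem hi1e, Finset.card_erase_of_mem hiS]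
        have : S.card ≠ 0 := fun hc0 => by
          rw [Finset.card_eq_zero] at hc0
          exact absurd (hc0 ▸ hiS) (Finset.notMem_empty i)
        omega
      · rw [up, Finset.sum_insert hi1e]
        have h2 : i + (∑ x ∈ S.erase i, x) = ∑ x ∈ S, x :=
          Finset.add_sum_erase S (fun x => x) hiS
        omega
  · rw [if_neg hc]

lemma cnt_mono_card {M n : ℕ} (hn : n ≤ M) (r : ℕ) (hr : 2*r < n*(M-n)) :
    (lvl M n (r + c2 n)).card ≤ (lvl M n (r + 1 + c2 n)).card := by
  classical
  set A := lvl M n (r + c2 n) with hA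
  set B := lvl M n (r + 1 + c2 n) with hB
  have hB' : B = lvl M n ((r + c2 n) + 1) := by rw [hB]; ring_nf
  let Φ : ({S // S ∈ A} → ℝ) →ₗ[ℝ] ({T // T ∈ B} → ℝ) :=
  { toFun := fun g T => ∑ S ∈ A.attach, u M T.1 S.1 * g S
    map_add' := by
      intro g h; funext T
      simp [mul_add, Finset.sum_add_distrib]
    map_smul' := by
      intro cc g; funext T
      simp only [smul_eq_mul, RingHom.id_apply, Pi.smul_apply]
      rw [Finset.mul_sum]
      exact Finset.sum_congr rfl fun S _ => by ring }
  have hinj : Function.Injective Φ := by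
    rw [injective_iff_map_eq_zero]
    intro g hg
    set fbar : Finset ℕ → ℝ := fun S => if h : S ∈ A then g ⟨S, h⟩ else 0 with hfbar
    have claim1 : ∀ T : Finset ℕ, (∑ S ∈ A, u M T S * fbar S)
        = ∑ S ∈ A.attach, u M T S.1 * g S := by
      intro T
      rw [← Finset.sum_attach A (fun S => u M T S * fbar S)]
      refine Finset.sum_congr rfl fun S _ => ?_
      rw [hfbar]
      simp [S.2]
    have hU0 : ∀ T ∈ bigU M n, (∑ S ∈ A, u M T S * fbar S) = 0 := by
      intro T _
      by_cases hTB : T ∈ B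
      · rw [claim1 T]
        exact congrFun hg ⟨T, hTB⟩
      · apply Finset.sum_eq_zero
        intro S hSA
        rw [u_support (hA ▸ hSA) (fun hc => hTB (hB' ▸ hc)), zero_mul]
    have hm := master (r := r) hn fbar
    have hL : (∑ T ∈ bigU M n, (∑ S ∈ lvl M n (r + c2 n), u M T S * fbar S)^2) = 0 := by
      apply Finset.sum_eq_zero
      intro T hT
      rw [← hA, hU0 T hT]
      norm_num
    rw [hL] at hm
    have hD : (0:ℝ) ≤ ∑ R ∈ bigU M n, (∑ S ∈ lvl M n (r + c2 n), u M S R * fbar S)^2 :=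
      Finset.sum_nonneg fun R _ => sq_nonneg _
    have hC : (0:ℝ) < ((n*(M-n) : ℕ) : ℝ) - 2*(r:ℝ) := by
      have h1 : ((2*r : ℕ) : ℝ) < ((n*(M-n) : ℕ) : ℝ) := Nat.cast_lt.2 hr
      push_cast at h1
      push_cast
      linarith
    have hF : (0:ℝ) ≤ ∑ S ∈ lvl M n (r + c2 n), (fbar S)^2 :=
      Finset.sum_nonneg fun S _ => sq_nonneg _
    have hzero : (∑ S ∈ lvl M n (r + c2 n), (fbar S)^2) = 0 := by
      nlinarith [hm, hD, hC, hF]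
    have hall : ∀ S ∈ lvl M n (r + c2 n), (fbar S)^2 = 0 :=
      (Finset.sum_eq_zero_iff_of_nonneg (fun S _ => sq_nonneg _)).1 hzero
    funext S
    have := hall S.1 (hA ▸ S.2)
    have hfS : fbar S.1 = 0 := by
      exact pow_eq_zero_iff (by norm_num) |>.1 this
    rw [hfbar] at hfS
    simpa [S.2] using hfS
  calc A.card = Fintype.card {S // S ∈ A} := (Fintype.card_coe A).symm
    _ = Module.finrank ℝ ({S // S ∈ A} → ℝ) := (Module.finrank_pi ℝ).symm
    _ ≤ Module.finrank ℝ ({T // T ∈ B} → ℝ) :=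
        LinearMap.finrank_le_finrank_of_injective hinj
    _ = Fintype.card {T // T ∈ B} := Module.finrank_pi ℝ
    _ = B.card := Fintype.card_coe B



/-- generating polynomial of subset sums -/
noncomputable def G (M n : ℕ) : Polynomial ℤ :=
  ∑ S ∈ Finset.powersetCard n (Finset.range M), X ^ (∑ i ∈ S, i)

noncomputable def D (k : ℕ) : Polynomial ℤ := ∏ j ∈ Finset.range k, (1 - X ^ (j+1))

lemma G_zero (M : ℕ) : G M 0 = 1 := by
  simp [G]

lemma G_pascal (M k : ℕ) : G (M+1) (k+1) = G M (k+1) + X ^ M * G M k := by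
  unfold G
  rw [Finset.range_add_one, Finset.powersetCard_succ_insert (by simp)]
  rw [Finset.sum_union, Finset.sum_image]
  · congr 1
    · rw [Finset.mul_sum]
      refine Finset.sum_congr rfl fun S hS => ?_
      have hM : M ∉ S := fun hc => by
        have := Finset.mem_powersetCard.1 hS
        exact absurd (this.1 hc) (by simp)
      rw [Finset.sum_insert hM, pow_add]
  · intro S hS T hT hST
    have hMS : M ∉ S := fun hc => absurd ((Finset.mem_powersetCard.1 hS).1 hc) (by simp)
    have hMT : M ∉ T := fun hc => absurd ((Finset.mem_powersetCard.1 hT).1 hc) (by simp)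
    have := congrArg (fun s => Finset.erase s M) hST
    simpa [Finset.erase_insert hMS, Finset.erase_insert hMT] using this
  · rw [Finset.disjoint_left]
    intro S hS hS'
    have hMS : M ∉ S := fun hc => absurd ((Finset.mem_powersetCard.1 hS).1 hc) (by simp)
    obtain ⟨T, hT, rfl⟩ := Finset.mem_image.1 hS'
    exact hMS (Finset.mem_insert_self _ _)

lemma G_mul : ∀ M n : ℕ, n ≤ M → G M n * D n * D (M - n) = X ^ (c2 n) * D M := by
  intro M
  induction M with
  | zero => intro n hn; interval_cases n; simp [G_zero, D, c2]
  | succ M ih =>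
    intro n hn
    match n with
    | 0 => simp [G_zero, D, c2]
    | Nat.succ k =>
      simp only [Nat.succ_eq_add_one] at hn ⊢
      rcases Nat.lt_or_ge k M with hk | hk
      · -- k+1 ≤ M
        have hk1 : k + 1 ≤ M := hk
        have e1 : M + 1 - (k+1) = (M - (k+1)) + 1 := by omega
        have e2 : M - k = (M - (k+1)) + 1 := by omega
        rw [G_pascal, e1]
        have hD1 : D ((M - (k+1)) + 1) = D (M - (k+1)) * (1 - X ^ (M - k)) := by
          rw [D, Finset.prod_range_succ, ← D, ← e2]
        have hDk : D (k+1) = D k * (1 - X ^ (k+1)) := by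
          rw [D, Finset.prod_range_succ, ← D]
        have hDM : D (M+1) = D M * (1 - X ^ (M+1)) := by
          rw [D, Finset.prod_range_succ, ← D]
        have ih1 := ih (k+1) hk1
        have ih2 := ih k (le_of_lt hk)
        rw [hD1, add_mul, add_mul]
        have t1 : G M (k+1) * D (k+1) * (D (M - (k+1)) * (1 - X ^ (M - k)))
            = X ^ c2 (k+1) * D M * (1 - X ^ (M - k)) := by
          rw [← mul_assoc, ih1]
        have t2 : X ^ M * G M k * D (k+1) * (D (M - (k+1)) * (1 - X ^ (M - k)))
            = X ^ c2 (k+1) * D M * (X ^ (M-k) * (1 - X ^ (k+1))) := by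
          rw [hDk]
          have hD2 : D (M - k) = D (M - (k+1)) * (1 - X ^ (M - k)) := by
            rw [e2, D, Finset.prod_range_succ, ← D, ← e2]
          have : X ^ M * G M k * (D k * (1 - X ^ (k+1))) * (D (M - (k+1)) * (1 - X ^ (M - k)))
              = (G M k * D k * D (M-k)) * (X ^ M * (1 - X ^ (k+1))) := by
            rw [hD2]; ring
          rw [this, ih2]
          have hexp : c2 k + M = c2 (k+1) + (M - k) := by
            rw [c2_succ]; omega
          calc X ^ c2 k * D M * (X ^ M * (1 - X ^ (k+1)))
              = X ^ (c2 k + M) * D M * (1 - X ^ (k+1)) := by rw [pow_add]; ring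
            _ = X ^ (c2 (k+1) + (M-k)) * D M * (1 - X ^ (k+1)) := by rw [hexp]
            _ = X ^ c2 (k+1) * D M * (X ^ (M-k) * (1 - X ^ (k+1))) := by
                rw [pow_add]; ring
        rw [t1, t2]
        have hfin : ((1 : Polynomial ℤ) - X ^ (M - k)) + (X ^ (M-k) * (1 - X ^ (k+1))) = 1 - X ^ (M+1) := by
          have : (X : Polynomial ℤ) ^ (M - k) * X ^ (k+1) = X ^ (M+1) := by
            rw [← pow_add]; congr 1; omega
          rw [mul_sub, mul_one, this]; ring
        calc X ^ c2 (k+1) * D M * (1 - X ^ (M - k)) + X ^ c2 (k+1) * D M * (X ^ (M-k) * (1 - X ^ (k+1)))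
            = X ^ c2 (k+1) * (D M * ((1 - X ^ (M - k)) + (X ^ (M-k) * (1 - X ^ (k+1))))) := by ring
          _ = X ^ c2 (k+1) * (D M * (1 - X ^ (M+1))) := by rw [hfin]
          _ = X ^ c2 (k+1) * D (M+1) := by rw [hDM]
          _ = _ := by ring
      · -- k ≥ M, so k+1 = M+1
        have : k = M := by omega
        subst this
        have hcard : (Finset.range (k+1)).card = k + 1 := by simp
        have hps := Finset.powersetCard_self (Finset.range (k+1))
        rw [hcard] at hps
        have hG : G (k+1) (k+1) = X ^ (c2 (k+1)) := by
          rw [G, hps, Finset.sum_singleton]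
          congr 1
          have h1 : (∑ i ∈ Finset.range (k+1), i) * 2 = (k+1) * k := by
            simpa using Finset.sum_range_id_mul_two (k+1)
          have h2 : c2 (k+1) = (k+1) * k / 2 := by
            simp [c2, Nat.choose_two_right]
          omega
        rw [hG]
        simp [D]

def cnt (M n t : ℕ) : ℕ :=
  ((Finset.powersetCard n (Finset.range M)).filter (fun S => ∑ i ∈ S, i = t)).card

lemma G_coeff (M n t : ℕ) : (G M n).coeff t = cnt M n t := by
  rw [G, Polynomial.finset_sum_coeff]
  simp only [Polynomial.coeff_X_pow]
  rw [Finset.sum_boole]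
  unfold cnt
  norm_cast
  congr 1
  exact Finset.filter_congr fun S _ => by simp [eq_comm]

theorem coeff_eq_cnt (M n : ℕ) (h : n ≤ M) (P : Polynomial ℤ)
    (hP : ∀ q : ℂ,
      (P.map (Int.castRingHom ℂ)).eval q *
          (∏ j ∈ Finset.range n, (1 - q ^ (j + 1))) *
          (∏ j ∈ Finset.range (M - n), (1 - q ^ (j + 1))) =
        ∏ j ∈ Finset.range M, (1 - q ^ (j + 1))) :
    ∀ r, P.coeff r = cnt M n (r + c2 n) := by
  set f := Int.castRingHom ℂ with hf
  have hDeval : ∀ (k : ℕ) (q : ℂ), Polynomial.eval q ((D k).map f)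
      = ∏ j ∈ Finset.range k, (1 - q ^ (j+1)) := by
    intro k q
    simp [D, Polynomial.map_prod, Polynomial.eval_prod]
  have h1 : P.map f * (D n).map f * (D (M-n)).map f = (D M).map f := by
    apply Polynomial.funext
    intro q
    simp only [eval_mul, hDeval]
    exact hP q
  have h2 : (G M n).map f * ((D n).map f * (D (M-n)).map f) = X ^ c2 n * (D M).map f := by
    have := congrArg (Polynomial.map f) (G_mul M n h)
    simpa [Polynomial.map_mul, Polynomial.map_pow, mul_assoc] using this
  have hDne : ∀ k, (D k).map f ≠ 0 := by
    intro k hk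
    have h0 : Polynomial.eval 0 ((D k).map f) = 1 := by
      rw [hDeval]
      simp
    rw [hk] at h0
    simp at h0
  have key : (G M n).map f = P.map f * X ^ c2 n := by
    have hc : ((G M n).map f) * ((D n).map f * (D (M-n)).map f)
        = (P.map f * X ^ c2 n) * ((D n).map f * (D (M-n)).map f) := by
      rw [h2, ← h1]; ring
    exact mul_right_cancel₀ (mul_ne_zero (hDne n) (hDne (M-n))) hc
  intro r
  have hcoeff : ((G M n).map f).coeff (r + c2 n) = (P.map f).coeff r := by
    rw [key, Polynomial.coeff_mul_X_pow]
  rw [Polynomial.coeff_map, Polynomial.coeff_map] at hcoeff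
  have : ((G M n).coeff (r + c2 n) : ℂ) = (P.coeff r : ℂ) := by
    simpa [hf] using hcoeff
  have h3 : (G M n).coeff (r + c2 n) = P.coeff r := by exact_mod_cast this
  rw [← h3, G_coeff]
lemma cnt_symm (M n : ℕ) (h : n ≤ M) (r : ℕ) (hr : r ≤ n * (M - n)) :
    cnt M n (r + c2 n) = cnt M n ((n * (M - n) - r) + c2 n) := by
  unfold cnt
  have hsplit : n * (M - 1) = n * (M - n) + n * (n - 1) := by
    rcases Nat.eq_zero_or_pos n with rfl | hn
    · simp
    · have : M - 1 = (M - n) + (n - 1) := by omega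
      rw [this, Nat.mul_add]
  have h2 := two_c2 n
  -- the reflection map
  set φ : Finset ℕ → Finset ℕ := fun S => S.image (fun i => M - 1 - i) with hφ
  have hmem : ∀ (t : ℕ) (S : Finset ℕ),
      S ∈ (Finset.powersetCard n (Finset.range M)).filter (fun S => ∑ i ∈ S, i = t) →
      (φ S ∈ Finset.powersetCard n (Finset.range M) ∧
        (∑ i ∈ φ S, i) + t = n * (M - 1) ∧ φ (φ S) = S) := by
    intro t S hS
    rw [Finset.mem_filter, Finset.mem_powersetCard] at hS
    obtain ⟨⟨hsub, hcard⟩, hsum⟩ := hS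
    have hbound : ∀ i ∈ S, i < M := fun i hi => Finset.mem_range.1 (hsub hi)
    have hinj : Set.InjOn (fun i => M - 1 - i) S := by
      intro a ha b hb hab
      have := hbound a ha; have := hbound b hb
      simp only at hab; omega
    refine ⟨?_, ?_, ?_⟩
    · rw [Finset.mem_powersetCard]
      constructor
      · intro x hx
        obtain ⟨i, hi, rfl⟩ := Finset.mem_image.1 hx
        have := hbound i hi
        exact Finset.mem_range.2 (by omega)
      · rw [Finset.card_image_of_injOn hinj, hcard]
    · rw [← hsum, hφ]
      rw [Finset.sum_image hinj, ← Finset.sum_add_distrib]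
      calc ∑ i ∈ S, (M - 1 - i + i) = ∑ _i ∈ S, (M - 1) :=
            Finset.sum_congr rfl fun i hi => by have := hbound i hi; omega
        _ = n * (M - 1) := by rw [Finset.sum_const, hcard, smul_eq_mul]
    · rw [hφ]
      simp only
      rw [Finset.image_image]
      calc S.image ((fun i => M - 1 - i) ∘ (fun i => M - 1 - i)) = S.image id := by
            apply Finset.image_congr
            intro i hi
            have := hbound i hi
            simp only [Function.comp_apply, id_eq]
            omega
        _ = S := Finset.image_id
  apply Finset.card_bij' (fun S _ => φ S) (fun S _ => φ S)
  · intro S hS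
    obtain ⟨h1, h2', h3⟩ := hmem _ S hS
    rw [Finset.mem_filter]
    exact ⟨h1, by omega⟩
  · intro S hS
    obtain ⟨h1, h2', h3⟩ := hmem _ S hS
    rw [Finset.mem_filter]
    exact ⟨h1, by omega⟩
  · intro S hS
    exact (hmem _ S hS).2.2
  · intro S hS
    exact (hmem _ S hS).2.2

lemma cnt_eq_lvl (M n t : ℕ) : cnt M n t = (lvl M n t).card := rfl

end GBU

/-- Symmetry and unimodality of the coefficients of the Gaussian binomial
coefficient: if `P` is the integer polynomial with
`P(q) ∏_{j=1}^n (1-q^j) ∏_{j=1}^{M-n} (1-q^j) = ∏_{j=1}^M (1-q^j)` for all `q`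
(i.e. `P = [M choose n]_q`), then its coefficients `V^{[r]}_{M,n} = P.coeff r`
satisfy `V^{[r]} = V^{[n(M-n)-r]}` for `0 ≤ r ≤ n(M-n)` and
`V^{[r]} ≤ V^{[r+1]}` for `r < n(M-n)/2`. -/
theorem gaussian_binomial_symmetric_unimodal (M n : ℕ) (h : n ≤ M)
    (P : Polynomial ℤ)
    (hP : ∀ q : ℂ,
      (P.map (Int.castRingHom ℂ)).eval q *
          (∏ j ∈ Finset.range n, (1 - q ^ (j + 1))) *
          (∏ j ∈ Finset.range (M - n), (1 - q ^ (j + 1))) =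
        ∏ j ∈ Finset.range M, (1 - q ^ (j + 1))) :
    (∀ r : ℕ, r ≤ n * (M - n) → P.coeff r = P.coeff (n * (M - n) - r)) ∧
    (∀ r : ℕ, 2 * r < n * (M - n) → P.coeff r ≤ P.coeff (r + 1)) := by
  have hco := GBU.coeff_eq_cnt M n h P hP
  constructor
  · intro r hr
    rw [hco r, hco (n * (M - n) - r)]
    exact_mod_cast congrArg (Nat.cast : ℕ → ℤ) (GBU.cnt_symm M n h r hr)
  · intro r hr
    rw [hco r, hco (r + 1)]
    have hmono := GBU.cnt_mono_card (M := M) (n := n) h r hr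
    rw [← GBU.cnt_eq_lvl, ← GBU.cnt_eq_lvl] at hmono
    exact_mod_cast hmono
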